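/- Let n ≥ 3, λ ≥ 0, and m ≥ 1 an integer, and let μ_1, …, μ_n ≥ 0 be the eigenvalues (with multiplicity) of the positive semidefinite matrix DDᵀ. Then the effective degrees of freedom of the boosted HP filter satisfy the exact formula tr(B_m) = tr(I_n − (I_n − S(λ))ᵐ) = n − ∑_{k=1}^n (λμ_k/(1 + λμ_k))ᵐ. -/

import Mathlib

open Matrix Filter

noncomputable section

/-- The second-differencing matrix `Dᵀ` of the HP filter: the `(n−2) × n` real matrix with
`(Dᵀ f)_j = f_j − 2 f_{j+1} + f_{j+2}` (here written with 0-based indices). -/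
def secondDiff (n : ℕ) : Matrix (Fin (n - 2)) (Fin n) ℝ := fun j t =>
  if t.1 = j.1 then 1 else if t.1 = j.1 + 1 then -2 else if t.1 = j.1 + 2 then 1 else 0

/-- The HP smoothing matrix `S(λ) = (I_n + λ D Dᵀ)⁻¹`, where `Dᵀ = secondDiff n`. -/
def hpS (n : ℕ) (lam : ℝ) : Matrix (Fin n) (Fin n) ℝ :=
  (1 + lam • ((secondDiff n)ᵀ * secondDiff n))⁻¹

open Polynomial in
/-- Similar matrices have equal characteristic polynomials. -/
lemma aux_conj_charpoly {n : ℕ} (V W M : Matrix (Fin n) (Fin n) ℝ)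
    (h1 : V * W = 1) : (V * M * W).charpoly = M.charpoly := by
  set f : Matrix (Fin n) (Fin n) ℝ →+* Matrix (Fin n) (Fin n) ℝ[X] :=
    (C : ℝ →+* ℝ[X]).mapMatrix with hf
  have hfmul : ∀ P Q : Matrix (Fin n) (Fin n) ℝ, f (P * Q) = f P * f Q := fun P Q => map_mul f P Q
  have hscalar : ∀ N : Matrix (Fin n) (Fin n) ℝ[X],
      N * Matrix.scalar (Fin n) (X : ℝ[X]) = Matrix.scalar (Fin n) (X : ℝ[X]) * N := by
    intro N
    exact (Matrix.scalar_commute (X : ℝ[X]) (fun r => Commute.all X r) N).symm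
  have key : charmatrix (V * M * W) = f V * charmatrix M * f W := by
    rw [charmatrix, charmatrix]
    rw [mul_sub, sub_mul]
    congr 1
    · have : f V * Matrix.scalar (Fin n) (X : ℝ[X]) * f W
          = Matrix.scalar (Fin n) (X : ℝ[X]) * (f V * f W) := by
        rw [hscalar (f V), mul_assoc]
      rw [this, ← hfmul, h1, _root_.map_one f, mul_one]
    · rw [hfmul, hfmul]
  rw [Matrix.charpoly, Matrix.charpoly, key, det_mul, det_mul]
  have : f V * f W = 1 := by rw [← hfmul, h1, _root_.map_one f]
  have hdet : det (f V) * det (f W) = 1 := by rw [← det_mul, this, det_one]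
  calc det (f V) * det (charmatrix M) * det (f W)
      = det (f V) * det (f W) * det (charmatrix M) := by ring
    _ = det (charmatrix M) := by rw [hdet, one_mul]

lemma aux_conj_pow {n : ℕ} (V W M : Matrix (Fin n) (Fin n) ℝ)
    (h1 : V * W = 1) (h2 : W * V = 1) (m : ℕ) : (V * M * W) ^ m = V * M ^ m * W := by
  induction m with
  | zero => simp [h1]
  | succ k ih =>
      rw [pow_succ, pow_succ, ih]
      calc V * M ^ k * W * (V * M * W) = V * M ^ k * (W * V) * M * W := by
            simp only [mul_assoc]
        _ = V * (M ^ k * M) * W := by rw [h2]; simp only [mul_assoc, mul_one, one_mul]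

lemma aux_conj_calc {n : ℕ} (V W : Matrix (Fin n) (Fin n) ℝ)
    (h1 : V * W = 1) (h2 : W * V = 1) (f : Fin n → ℝ) (hf : ∀ i, f i ≠ 0) (m : ℕ) :
    1 - (1 - (V * diagonal f * W)⁻¹) ^ m
      = V * diagonal (fun i => 1 - (1 - (f i)⁻¹) ^ m) * W := by
  have hVinv : V⁻¹ = W := inv_eq_right_inv h1
  have hWinv : W⁻¹ = V := inv_eq_right_inv h2
  have hdiaginv : (diagonal f)⁻¹ = diagonal (fun i => (f i)⁻¹) := by
    apply inv_eq_right_inv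
    rw [Matrix.diagonal_mul_diagonal]
    rw [show (fun i => f i * (f i)⁻¹) = fun _ => (1:ℝ) from funext fun i => mul_inv_cancel₀ (hf i)]
    exact Matrix.diagonal_one
  have hinv : (V * diagonal f * W)⁻¹ = V * diagonal (fun i => (f i)⁻¹) * W := by
    rw [Matrix.mul_inv_rev, Matrix.mul_inv_rev, hVinv, hWinv, hdiaginv, mul_assoc]
  have hone : (1 : Matrix (Fin n) (Fin n) ℝ) = V * 1 * W := by rw [mul_one, h1]
  have hsub : ∀ P Q : Matrix (Fin n) (Fin n) ℝ, V * P * W - V * Q * W = V * (P - Q) * W := by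
    intro P Q
    rw [Matrix.mul_sub, Matrix.sub_mul]
  rw [hinv]
  conv_lhs => rw [hone]
  rw [hsub, aux_conj_pow _ _ _ h1 h2, hsub]
  congr 2
  have step1 : (1 : Matrix (Fin n) (Fin n) ℝ) - diagonal (fun i => (f i)⁻¹)
      = diagonal (fun i => 1 - (f i)⁻¹) := by
    rw [← Matrix.diagonal_one, ← Matrix.diagonal_sub]
  have step2 : diagonal (fun i => 1 - (f i)⁻¹) ^ m
      = diagonal (fun i => (1 - (f i)⁻¹) ^ m) := by
    rw [Matrix.diagonal_pow]
    rfl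
  rw [step1, step2, ← Matrix.diagonal_one, ← Matrix.diagonal_sub]

open Polynomial in
lemma aux_roots_prod {n : ℕ} (f : Fin n → ℝ) :
    (∏ i, (X - C (f i))).roots = Finset.univ.val.map f := by
  have : (∏ i, (X - C (f i)))
      = ((Finset.univ.val.map f).map (fun a => X - C a)).prod := by
    rw [Multiset.map_map]
    rfl
  rw [this, roots_multiset_prod_X_sub_C]

/-- Let `n ≥ 3`, `λ ≥ 0`, `m ≥ 1`, and let `μ_1, …, μ_n ≥ 0` be the
eigenvalues (with multiplicity, encoded via the characteristic polynomial) of the positive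
semidefinite matrix `D Dᵀ`. Then
`tr(B_m) = tr(I_n − (I_n − S(λ))ᵐ) = n − ∑_{k=1}^n (λμ_k/(1 + λμ_k))ᵐ`. -/
theorem stmt10 (n : ℕ) (hn : 3 ≤ n) (lam : ℝ) (hlam : 0 ≤ lam) (m : ℕ) (hm : 1 ≤ m)
    (μ : Fin n → ℝ) (hμ : ∀ k, 0 ≤ μ k)
    (hchar : ((secondDiff n)ᵀ * secondDiff n).charpoly =
      ∏ k, (Polynomial.X - Polynomial.C (μ k))) :
    Matrix.trace (1 - (1 - hpS n lam) ^ m) =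
      (n : ℝ) - ∑ k, (lam * μ k / (1 + lam * μ k)) ^ m := by
  classical
  set A : Matrix (Fin n) (Fin n) ℝ := (secondDiff n)ᵀ * secondDiff n with hAdef
  have hA : A.IsHermitian := by
    have h := Matrix.isHermitian_conjTranspose_mul_self (secondDiff n)
    rwa [Matrix.conjTranspose_eq_transpose_of_trivial] at h
  have hPSD : A.PosSemidef := by
    have h := Matrix.posSemidef_conjTranspose_mul_self (secondDiff n)
    rwa [Matrix.conjTranspose_eq_transpose_of_trivial] at h
  set e : Fin n → ℝ := hA.eigenvalues with he
  have hepos : ∀ i, 0 ≤ e i := hPSD.eigenvalues_nonneg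
  set V : Matrix (Fin n) (Fin n) ℝ := (hA.eigenvectorUnitary : Matrix (Fin n) (Fin n) ℝ)
    with hV
  have hmem := hA.eigenvectorUnitary.2
  rw [Matrix.mem_unitaryGroup_iff'] at hmem
  have h2 : star V * V = 1 := hmem
  have h1 : V * star V = 1 := mul_eq_one_comm.mpr h2
  have hspec : A = V * diagonal e * star V := by
    have h := hA.spectral_theorem
    rwa [RCLike.ofReal_real_eq_id, Function.id_comp] at h
  -- eigenvalue multiset equals μ multiset
  have hms : Finset.univ.val.map e = Finset.univ.val.map μ := by
    have hcharA : A.charpoly = ∏ i, (Polynomial.X - Polynomial.C (e i)) := by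
      rw [hspec, aux_conj_charpoly _ _ _ h1]
      have hbt : (diagonal e).BlockTriangular id := Matrix.blockTriangular_diagonal e
      rw [Matrix.charpoly_of_upperTriangular _ hbt]
      simp
    have := hcharA.symm.trans hchar
    have hr := congrArg Polynomial.roots this
    rwa [aux_roots_prod, aux_roots_prod] at hr
  have hsum : ∀ g : ℝ → ℝ, ∑ i, g (e i) = ∑ i, g (μ i) := by
    intro g
    have h1' : ∑ i, g (e i) = ((Finset.univ.val.map e).map g).sum := by
      rw [Multiset.map_map]; rfl
    have h2' : ∑ i, g (μ i) = ((Finset.univ.val.map μ).map g).sum := by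
      rw [Multiset.map_map]; rfl
    rw [h1', h2', hms]
  -- positivity of 1 + lam * e i
  have hd : ∀ i, (0:ℝ) < 1 + lam * e i := fun i => by
    have := mul_nonneg hlam (hepos i); linarith
  -- rewrite hpS
  have hconj : (1 : Matrix (Fin n) (Fin n) ℝ) + lam • A
      = V * diagonal (fun i => 1 + lam * e i) * star V := by
    have : diagonal (fun i => 1 + lam * e i)
        = 1 + lam • diagonal e := by
      rw [← Matrix.diagonal_one, ← Matrix.diagonal_smul, ← Matrix.diagonal_add]
      rfl
    rw [this, Matrix.mul_add, Matrix.add_mul, mul_one, h1, Matrix.mul_smul,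
      Matrix.smul_mul, ← hspec]
  have hkey := aux_conj_calc V (star V) h1 h2 (fun i => 1 + lam * e i)
    (fun i => (hd i).ne') m
  have hstep : Matrix.trace (1 - (1 - hpS n lam) ^ m)
      = ∑ i, (1 - (1 - (1 + lam * e i)⁻¹) ^ m) := by
    rw [hpS, ← hAdef, hconj, hkey, Matrix.trace_mul_cycle, h2, one_mul, Matrix.trace_diagonal]
  rw [hstep]
  have hterm : ∀ x : ℝ, 0 ≤ x →
      1 - (1 - (1 + lam * x)⁻¹) ^ m = 1 - (lam * x / (1 + lam * x)) ^ m := by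
    intro x hx
    have hpos : (0:ℝ) < 1 + lam * x := by
      have := mul_nonneg hlam hx; linarith
    have : 1 - (1 + lam * x)⁻¹ = lam * x / (1 + lam * x) := by
      field_simp
      ring
    rw [this]
  have : ∑ i, (1 - (1 - (1 + lam * e i)⁻¹) ^ m)
      = ∑ i, (1 - (lam * μ i / (1 + lam * μ i)) ^ m) := by
    rw [Finset.sum_congr rfl (fun i _ => hterm (e i) (hepos i))]
    exact hsum (fun x => 1 - (lam * x / (1 + lam * x)) ^ m)
  rw [this, Finset.sum_sub_distrib]
  simp [Finset.card_univ]

end
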